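/- Assume the direct-system setup with the interleaving hypothesis (H) and properties (S) and (K). Then for every n, ker(i_n) ⊆ ker(i_{n,n+3}); that is, if x ∈ F_n satisfies i_n(x) = 0 in F_∞, then i_{n,n+3}(x) = 0 in F_{n+3}. -/
import Mathlib


/-- Claim 3.3 of the paper: under the direct-system setup with the interleaving
hypothesis (H) and properties (S) and (K), `ker(i_n) ⊆ ker(i_{n,n+3})`. -/
theorem ker_i_subset_ker_transition
    (F : ℕ → Type) [∀ n, AddCommGroup (F n)]
    (Finf : Type) [AddCommGroup Finf]
    (i2 : ∀ n m : ℕ, n ≤ m → (F n →+ F m))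
    (i : ∀ n, F n →+ Finf)
    (hFid : ∀ (n : ℕ) (x : F n), i2 n n le_rfl x = x)
    (hFcomp : ∀ (n m l : ℕ) (h1 : n ≤ m) (h2 : m ≤ l) (x : F n),
      i2 m l h2 (i2 n m h1 x) = i2 n l (h1.trans h2) x)
    (hicompat : ∀ (n m : ℕ) (h : n ≤ m) (x : F n), i m (i2 n m h x) = i n x)
    (hiexh : ∀ z : Finf, ∃ (n : ℕ) (x : F n), i n x = z)
    (hiker : ∀ (n : ℕ) (x : F n), i n x = 0 → ∃ (m : ℕ) (h : n ≤ m), i2 n m h x = 0)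
    (G : ℕ → ℕ → Type) [∀ k n, AddCommGroup (G k n)]
    (Ginf : ℕ → Type) [∀ k, AddCommGroup (Ginf k)]
    (j2 : ∀ (k n m : ℕ), n ≤ m → (G k n →+ G k m))
    (j : ∀ k n, G k n →+ Ginf k)
    (hGid : ∀ (k n : ℕ) (y : G k n), j2 k n n le_rfl y = y)
    (hGcomp : ∀ (k n m l : ℕ) (h1 : n ≤ m) (h2 : m ≤ l) (y : G k n),
      j2 k m l h2 (j2 k n m h1 y) = j2 k n l (h1.trans h2) y)
    (hjcompat : ∀ (k n m : ℕ) (h : n ≤ m) (y : G k n), j k m (j2 k n m h y) = j k n y)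
    (hjexh : ∀ (k : ℕ) (z : Ginf k), ∃ (n : ℕ) (y : G k n), j k n y = z)
    (hjker : ∀ (k n : ℕ) (y : G k n), j k n y = 0 → ∃ (m : ℕ) (h : n ≤ m), j2 k n m h y = 0)
    (hH : ∀ n₀ : ℕ, ∃ (k : ℕ) (a : ∀ n, F n →+ G k (n+1)) (b : ∀ n, G k n →+ F (n+1)),
      (∀ n, n + 1 ≤ n₀ → ∀ x : F n,
        a (n+1) (i2 n (n+1) (by omega) x) = j2 k (n+1) (n+2) (by omega) (a n x)) ∧
      (∀ n, n + 1 ≤ n₀ → ∀ y : G k n,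
        b (n+1) (j2 k n (n+1) (by omega) y) = i2 (n+1) (n+2) (by omega) (b n y)) ∧
      (∀ n, n + 1 ≤ n₀ → ∀ x : F n, b (n+1) (a n x) = i2 n (n+2) (by omega) x) ∧
      (∀ n, n + 1 ≤ n₀ → ∀ y : G k n, a (n+1) (b n y) = j2 k n (n+2) (by omega) y))
    (hS : ∀ k n, Function.Surjective (j k n))
    (hK : ∀ (k n : ℕ) (y : G k n), j k n y = 0 → j2 k n (n+1) (by omega) y = 0)
    : ∀ (n : ℕ) (x : F n), i n x = 0 → i2 n (n+3) (by omega) x = 0 := by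
  intro n x hx
  obtain ⟨m, hnm, hm0⟩ := hiker n x hx
  obtain ⟨k, a, b, hac, hbc, hba, hab⟩ := hH (max m (n+2))
  have key : ∀ p (h1 : n ≤ p), p ≤ max m (n+2) →
      j2 k (n+1) (p+1) (by omega) (a n x) = a p (i2 n p h1 x) := by
    intro p
    induction p with
    | zero =>
      intro h1 _
      have hn : n = 0 := by omega
      subst hn
      rw [hGid, hFid]
    | succ q ih =>
      intro h1 h2
      rcases Nat.lt_or_ge n (q+1) with h | h
      · have hq : n ≤ q := by omega
        rw [← hGcomp k (n+1) (q+1) (q+2) (by omega) (by omega),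
            ih hq (by omega), ← hFcomp n q (q+1) hq (by omega),
            hac q (by omega)]
      · have hn : n = q + 1 := by omega
        subst hn
        rw [hGid, hFid]
  have h1 : j k (n+1) (a n x) = 0 := by
    have hc := hjcompat k (n+1) (m+1) (by omega) (a n x)
    rw [← hc, key m hnm (le_max_left _ _), hm0, map_zero, map_zero]
  have h2 := hK k (n+1) (a n x) h1
  have h3 := hbc (n+1) (by omega) (a n x)
  rw [h2, map_zero, hba n (by omega) x, hFcomp] at h3
  exact h3.symm
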